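/- For a cartesian category S with weak pullbacks, the weak-subobjects functor Ψ : S^op → InfSL, sending A to the poset reflection of the slice S/A, is an elementary existential doctrine: each fibre is an inf-semilattice, the equality δ_A ∈ Ψ(A×A) is the class of the diagonal ⟨id_A,id_A⟩ : A → A×A, and post-composition with projections gives left adjoints to reindexing satisfying Beck–Chevalley and Frobenius reciprocity. -/

import Mathlib

open CategoryTheory CategoryTheory.Limits

universe u v

/-- A choice of weak pullbacks: for every cospan a weakly universal cone. -/
structure WeakPullbacks (S : Type u) [Category.{v} S] where
  obj : ∀ {X Y Z : S}, (X ⟶ Z) → (Y ⟶ Z) → S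
  fst : ∀ {X Y Z : S} (f : X ⟶ Z) (g : Y ⟶ Z), obj f g ⟶ X
  snd : ∀ {X Y Z : S} (f : X ⟶ Z) (g : Y ⟶ Z), obj f g ⟶ Y
  comm : ∀ {X Y Z : S} (f : X ⟶ Z) (g : Y ⟶ Z), fst f g ≫ f = snd f g ≫ g
  lift : ∀ {X Y Z V : S} {f : X ⟶ Z} {g : Y ⟶ Z} (a : V ⟶ X) (b : V ⟶ Y),
    a ≫ f = b ≫ g → (V ⟶ obj f g)
  lift_fst : ∀ {X Y Z V : S} {f : X ⟶ Z} {g : Y ⟶ Z} (a : V ⟶ X) (b : V ⟶ Y)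
    (h : a ≫ f = b ≫ g), lift a b h ≫ fst f g = a
  lift_snd : ∀ {X Y Z V : S} {f : X ⟶ Z} {g : Y ⟶ Z} (a : V ⟶ X) (b : V ⟶ Y)
    (h : a ≫ f = b ≫ g), lift a b h ≫ snd f g = b

variable {S : Type u} [Category.{v} S]

/-- Representatives of weak subobjects of `A`: arrows into `A`. The fibre
`Ψ(A)` is the poset reflection of this preordered type. -/
def Om (A : S) := Σ X : S, X ⟶ A

/-- The weak-subobject preorder: `f ≤ g` iff `f` factors through `g`.
The poset reflection of this preorder is the fibre `Ψ(A)`. -/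
def wle {A : S} (f g : Om A) : Prop := ∃ k : f.1 ⟶ g.1, k ≫ g.2 = f.2

/-- Reindexing `Ψ_h`, computed by weak pullback along `h`. -/
noncomputable def wreindex (W : WeakPullbacks S) {A B : S} (h : B ⟶ A) (f : Om A) :
    Om B := ⟨W.obj f.2 h, W.snd f.2 h⟩

/-- Binary meet in the fibre, computed by weak pullback. -/
noncomputable def wmeet (W : WeakPullbacks S) {A : S} (f g : Om A) : Om A :=
  ⟨W.obj f.2 g.2, W.fst f.2 g.2 ≫ f.2⟩

/-- The left adjoint `∃_h`, computed by post-composition. -/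
def wpush {A B : S} (h : A ⟶ B) (f : Om A) : Om B := ⟨f.1, f.2 ≫ h⟩

/-- for a cartesian category `S` with weak pullbacks, the
weak-subobjects functor `Ψ` is an elementary existential doctrine: each fibre
is an inf-semilattice with top, `δ_A` is the class of the diagonal, and
post-composition along projections is left adjoint to reindexing, satisfying
Beck–Chevalley and Frobenius reciprocity (all stated on representatives,
i.e. up to the poset reflection). -/
theorem weak_subobjects_elementary_existential
    (S : Type u) [Category.{v} S] [HasBinaryProducts S] (W : WeakPullbacks S) :
    -- binary meets: `wmeet` is a greatest lower bound
    (∀ (A : S) (f g : Om A),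
      wle (wmeet W f g) f ∧ wle (wmeet W f g) g ∧
        ∀ h : Om A, wle h f → wle h g → wle h (wmeet W f g)) ∧
    -- top element
    (∀ (A : S) (f : Om A), wle f ⟨A, 𝟙 A⟩) ∧
    -- post-composition is left adjoint to reindexing by weak pullback
    (∀ (A B : S) (h : B ⟶ A) (f : Om B) (g : Om A),
      wle (wpush h f) g ↔ wle f (wreindex W h g)) ∧
    -- elementary structure: `Ψ_{pr₁}(α) ∧ δ_A` represents `∃_{⟨id,id⟩}(α)`
    (∀ (A : S) (α : Om A),
      wle (wmeet W (wreindex W (prod.fst : A ⨯ A ⟶ A) α) ⟨A, diag A⟩)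
          (wpush (diag A) α) ∧
      wle (wpush (diag A) α)
          (wmeet W (wreindex W (prod.fst : A ⨯ A ⟶ A) α) ⟨A, diag A⟩)) ∧
    -- Frobenius reciprocity along projections
    (∀ (A B : S) (α : Om A) (β : Om (A ⨯ B)),
      wle (wpush prod.fst (wmeet W (wreindex W (prod.fst : A ⨯ B ⟶ A) α) β))
          (wmeet W α (wpush prod.fst β)) ∧
      wle (wmeet W α (wpush prod.fst β))
          (wpush prod.fst (wmeet W (wreindex W (prod.fst : A ⨯ B ⟶ A) α) β))) ∧
    -- Beck–Chevalley condition for the standard squares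
    (∀ (A A' B : S) (f : A' ⟶ A) (β : Om (A ⨯ B)),
      wle (wpush prod.fst (wreindex W (prod.map f (𝟙 B)) β))
          (wreindex W f (wpush prod.fst β)) ∧
      wle (wreindex W f (wpush prod.fst β))
          (wpush prod.fst (wreindex W (prod.map f (𝟙 B)) β))) := by
  refine ⟨?_, ?_, ?_, ?_, ?_, ?_⟩
  · -- meets
    intro A f g
    refine ⟨⟨W.fst f.2 g.2, rfl⟩, ⟨W.snd f.2 g.2, (W.comm f.2 g.2).symm⟩, ?_⟩
    rintro h ⟨k1, hk1⟩ ⟨k2, hk2⟩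
    refine ⟨W.lift k1 k2 (by rw [hk1, hk2]), ?_⟩
    show W.lift k1 k2 _ ≫ W.fst f.2 g.2 ≫ f.2 = h.2
    rw [← Category.assoc, W.lift_fst, hk1]
  · -- top
    intro A f
    exact ⟨f.2, Category.comp_id _⟩
  · -- adjunction
    intro A B h f g
    constructor
    · rintro ⟨k, hk⟩
      exact ⟨W.lift k f.2 hk, W.lift_snd k f.2 hk⟩
    · rintro ⟨k, hk⟩
      replace hk : k ≫ W.snd g.2 h = f.2 := hk
      refine ⟨k ≫ W.fst g.2 h, ?_⟩
      show (k ≫ W.fst g.2 h) ≫ g.2 = f.2 ≫ h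
      exact (Category.assoc _ _ _).trans ((congrArg (k ≫ ·) (W.comm g.2 h)).trans
        ((Category.assoc _ _ _).symm.trans (congrArg (· ≫ h) hk)))
  · -- elementary
    intro A α
    set q := W.snd α.2 (prod.fst : A ⨯ A ⟶ A) with hq
    constructor
    · -- L ≤ push diag
      set u := W.fst q (diag A)
      set v := W.snd q (diag A)
      have huv : u ≫ q = v ≫ diag A := W.comm q (diag A)
      refine ⟨u ≫ W.fst α.2 prod.fst, ?_⟩
      show (u ≫ W.fst α.2 prod.fst) ≫ α.2 ≫ diag A = u ≫ q
      have h1 : W.fst α.2 prod.fst ≫ α.2 = q ≫ prod.fst := W.comm α.2 prod.fst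
      rw [Category.assoc, ← Category.assoc (W.fst α.2 prod.fst), h1]
      rw [← Category.assoc, ← Category.assoc, huv]
      simp [diag, prod.lift_fst, prod.lift_snd]
    · -- push diag ≤ L
      have hm : 𝟙 α.1 ≫ α.2 = (α.2 ≫ diag A) ≫ (prod.fst : A ⨯ A ⟶ A) := by
        simp [diag, prod.lift_fst, prod.lift_snd]
      set m := W.lift (𝟙 α.1) (α.2 ≫ diag A) hm with hmdef
      have hmq : m ≫ q = α.2 ≫ diag A := W.lift_snd _ _ hm
      refine ⟨W.lift m α.2 hmq, ?_⟩
      show W.lift m α.2 hmq ≫ W.fst q (diag A) ≫ q = α.2 ≫ diag A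
      rw [← Category.assoc, W.lift_fst, hmq]
  · -- Frobenius
    intro A B α β
    set q := W.snd α.2 (prod.fst : A ⨯ B ⟶ A) with hqd
    set p := W.fst α.2 (prod.fst : A ⨯ B ⟶ A) with hpd
    have hpq : p ≫ α.2 = q ≫ prod.fst := W.comm _ _
    constructor
    · set u := W.fst q β.2
      set v := W.snd q β.2
      have huv : u ≫ q = v ≫ β.2 := W.comm q β.2
      have hk : (u ≫ p) ≫ α.2 = v ≫ β.2 ≫ prod.fst := by
        rw [Category.assoc, hpq, ← Category.assoc, huv, Category.assoc]
      refine ⟨W.lift (u ≫ p) v hk, ?_⟩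
      show W.lift (u ≫ p) v hk ≫ W.fst α.2 (β.2 ≫ prod.fst) ≫ α.2
          = (u ≫ q) ≫ prod.fst
      rw [← Category.assoc, W.lift_fst, hk, huv, Category.assoc]
    · set a := W.fst α.2 (β.2 ≫ prod.fst)
      set b := W.snd α.2 (β.2 ≫ prod.fst)
      have hab : a ≫ α.2 = (b ≫ β.2) ≫ prod.fst := by
        have := W.comm α.2 (β.2 ≫ prod.fst)
        simpa using this
      set m := W.lift a (b ≫ β.2) hab with hmdef
      have hmq : m ≫ q = b ≫ β.2 := W.lift_snd _ _ hab
      refine ⟨W.lift m b hmq, ?_⟩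
      show W.lift m b hmq ≫ (W.fst q β.2 ≫ q) ≫ prod.fst = a ≫ α.2
      rw [← Category.assoc, ← Category.assoc, W.lift_fst, hmq, ← hab]
  · -- Beck–Chevalley
    intro A A' B f β
    constructor
    · set u := W.fst β.2 (prod.map f (𝟙 B))
      set v := W.snd β.2 (prod.map f (𝟙 B))
      have huv : u ≫ β.2 = v ≫ prod.map f (𝟙 B) := W.comm _ _
      have hk : u ≫ β.2 ≫ prod.fst = (v ≫ prod.fst) ≫ f := by
        rw [← Category.assoc, huv, Category.assoc, prod.map_fst,
          ← Category.assoc]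
      refine ⟨W.lift u (v ≫ prod.fst) hk, ?_⟩
      show W.lift u (v ≫ prod.fst) hk ≫ W.snd (β.2 ≫ prod.fst) f
          = v ≫ prod.fst
      exact W.lift_snd _ _ hk
    · set a := W.fst (β.2 ≫ prod.fst) f
      set b := W.snd (β.2 ≫ prod.fst) f
      have hab : (a ≫ β.2) ≫ prod.fst = b ≫ f := by
        have := W.comm (β.2 ≫ prod.fst) f
        simpa using this
      set c : _ ⟶ A' ⨯ B := prod.lift b (a ≫ β.2 ≫ prod.snd) with hcdef
      have hc : a ≫ β.2 = c ≫ prod.map f (𝟙 B) := by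
        apply Limits.prod.hom_ext
        · simp [hcdef, ← hab, prod.lift_fst]
        · simp [hcdef, prod.lift_snd]
      refine ⟨W.lift a c hc, ?_⟩
      show W.lift a c hc ≫ W.snd β.2 (prod.map f (𝟙 B)) ≫ prod.fst = b
      rw [← Category.assoc, W.lift_snd]
      simp [hcdef, prod.lift_fst]
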